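/- For every complex number q and every n ≥ 1, Σ_{k=0}^{n} [n choose k]_q · B_{n−k}(x|q) · H_k(x|q) = 0, as an identity of polynomials in x. -/

import Mathlib

open Polynomial Finset

noncomputable section

/-- The `q`-integer `[n]_q = 1 + q + ⋯ + q^{n-1}`. -/
def qInt (q : ℂ) (n : ℕ) : ℂ := ∑ i ∈ Finset.range n, q ^ i

/-- The Gaussian (`q`-)binomial coefficient `[n choose k]_q`, defined via the `q`-Pascal
rule; it is a polynomial in `q` and agrees with `[n]_q!/([k]_q![n-k]_q!)` whenever the
latter quotient is well defined. -/
def qBinom (q : ℂ) : ℕ → ℕ → ℂ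
  | _, 0 => 1
  | 0, _ + 1 => 0
  | n + 1, k + 1 => qBinom q n k + q ^ (k + 1) * qBinom q n (k + 1)

/-- The (renormalized) continuous `q`-Hermite polynomials:
`H_{-1} = 0`, `H_0 = 1`, `H_{n+1}(x) = x H_n(x) - [n]_q H_{n-1}(x)`. -/
def qHermite (q : ℂ) : ℕ → Polynomial ℂ
  | 0 => 1
  | 1 => X
  | n + 2 => X * qHermite q (n + 1) - C (qInt q (n + 1)) * qHermite q n

/-- The polynomials `B_n(x|q)`:
`B_{-1} = 0`, `B_0 = 1`, `B_{n+1}(x) = -q^n x B_n(x) + q^{n-1} [n]_q B_{n-1}(x)`. -/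
def Bpoly (q : ℂ) : ℕ → Polynomial ℂ
  | 0 => 1
  | 1 => -X
  | n + 2 => -(C (q ^ (n + 1)) * X) * Bpoly q (n + 1) + C (q ^ n * qInt q (n + 1)) * Bpoly q n

/-! ### Auxiliary lemmas on `q`-integers and `q`-binomial coefficients -/

lemma qInt_zero (q : ℂ) : qInt q 0 = 0 := by simp [qInt]

lemma qInt_one (q : ℂ) : qInt q 1 = 1 := by simp [qInt]

lemma qInt_succ (q : ℂ) (n : ℕ) : qInt q (n+1) = qInt q n + q ^ n := by
  simp [qInt, Finset.sum_range_succ]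

lemma qInt_succ' (q : ℂ) (n : ℕ) : qInt q (n+1) = 1 + q * qInt q n := by
  rw [qInt, Finset.sum_range_succ', qInt, Finset.mul_sum]
  simp [pow_succ, mul_comm, add_comm]

lemma qInt_add (q : ℂ) (a b : ℕ) : qInt q (a+b) = qInt q a + q ^ a * qInt q b := by
  induction b with
  | zero => simp [qInt_zero]
  | succ b ih => rw [← Nat.add_assoc, qInt_succ, ih, qInt_succ]; ring

lemma qBinom_zero_right (q : ℂ) (n : ℕ) : qBinom q n 0 = 1 := by cases n <;> rfl

lemma qBinom_succ_succ (q : ℂ) (n k : ℕ) :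
    qBinom q (n+1) (k+1) = qBinom q n k + q ^ (k + 1) * qBinom q n (k + 1) := rfl

lemma qBinom_eq_zero (q : ℂ) : ∀ n k, n < k → qBinom q n k = 0
  | _, 0, h => by omega
  | 0, k+1, _ => rfl
  | n+1, k+1, h => by
    have h1 : n < k := Nat.lt_of_succ_lt_succ h
    rw [qBinom, qBinom_eq_zero q n k h1, qBinom_eq_zero q n (k+1) (h1.trans (Nat.lt_succ_self k))]
    ring

lemma qBinom_one_right (q : ℂ) (n : ℕ) : qBinom q n 1 = qInt q n := by
  induction n with
  | zero => simp [qBinom, qInt_zero]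
  | succ n ih => rw [qBinom, qBinom_zero_right, ih, qInt_succ', pow_one]

lemma lemD (q : ℂ) : ∀ n k, qBinom q n k * qInt q (n - k) = qBinom q n (k+1) * qInt q (k+1)
  | 0, k => by
    rw [Nat.zero_sub, qInt_zero, qBinom_eq_zero q 0 (k+1) (Nat.succ_pos k)]
    ring
  | n+1, 0 => by
    rw [qBinom_zero_right, qBinom_one_right, Nat.sub_zero, qInt_one, one_mul, mul_one]
  | n+1, j+1 => by
    have key1 := lemD q n j
    have key2 := lemD q n (j+1)
    rw [Nat.succ_sub_succ]
    show (qBinom q n j + q^(j+1) * qBinom q n (j+1)) * qInt q (n - j)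
      = (qBinom q n (j+1) + q^(j+2) * qBinom q n (j+2)) * qInt q (j+2)
    rcases Nat.lt_or_ge n (j+1) with h | h
    · rw [Nat.sub_eq_zero_of_le (Nat.le_of_lt_succ h), qInt_zero,
        qBinom_eq_zero q n (j+1) h, qBinom_eq_zero q n (j+2) (h.trans (Nat.lt_succ_self _))]
      ring
    · have hnj : n - j = (n - (j+1)) + 1 := by omega
      have hu : qInt q (n-j) = 1 + q * qInt q (n-(j+1)) := by rw [hnj, qInt_succ']
      have hs : qInt q (j+2) = qInt q (j+1) + q^(j+1) := qInt_succ q (j+1)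
      linear_combination key1 + q^(j+2) * key2 + q^(j+1) * qBinom q n (j+1) * hu
        - qBinom q n (j+1) * hs

lemma lemA (q : ℂ) : ∀ n k, qBinom q (n+1) (k+1) * qInt q (k+1) = qInt q (n+1) * qBinom q n k
  | 0, 0 => by
    show (qBinom q 0 0 + q^1 * qBinom q 0 1) * qInt q 1 = qInt q 1 * qBinom q 0 0
    show ((1:ℂ) + q^1 * 0) * qInt q 1 = qInt q 1 * 1
    ring
  | 0, k+1 => by
    rw [qBinom_eq_zero q 1 (k+2) (by omega), qBinom_eq_zero q 0 (k+1) (by omega)]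
    ring
  | n+1, k => by
    rcases Nat.lt_or_ge (n+1) k with h | h
    · rw [qBinom_eq_zero q (n+2) (k+1) (by omega), qBinom_eq_zero q (n+1) k (by omega)]
      ring
    · have hd := lemD q (n+1) k
      have hadd : qInt q (n+2) = qInt q (k+1) + q^(k+1) * qInt q (n+1-k) := by
        have : (k+1) + (n+1-k) = n+2 := by omega
        rw [← this, qInt_add]
      show (qBinom q (n+1) k + q^(k+1) * qBinom q (n+1) (k+1)) * qInt q (k+1)
        = qInt q (n+2) * qBinom q (n+1) k
      linear_combination -q^(k+1) * hd - qBinom q (n+1) k * hadd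

lemma lemB (q : ℂ) (n k : ℕ) :
    qBinom q (n+1) k * qInt q (n+1-k) = qInt q (n+1) * qBinom q n k := by
  rw [lemD q (n+1) k, lemA q n k]

/-! ### Auxiliary lemmas on the polynomials -/

lemma qHermite_succ (q : ℂ) (k : ℕ) :
    qHermite q (k+1) = X * qHermite q k - C (qInt q k) * qHermite q (k-1) := by
  cases k with
  | zero => simp [qHermite, qInt_zero]
  | succ k => rfl

lemma Bpoly_succ (q : ℂ) (j : ℕ) :
    Bpoly q (j+1) = -(C (q ^ j) * X) * Bpoly q j + C (q ^ (j-1) * qInt q j) * Bpoly q (j-1) := by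
  cases j with
  | zero => simp [Bpoly, qInt_zero]
  | succ j => rfl

/-- The sum appearing in the theorem. -/
def Ssum (q : ℂ) (n : ℕ) : Polynomial ℂ :=
  ∑ k ∈ Finset.range (n + 1), C (qBinom q n k) * Bpoly q (n - k) * qHermite q k

lemma Ssum_one (q : ℂ) : Ssum q 1 = 0 := by
  rw [Ssum]
  rw [Finset.sum_range_succ, Finset.sum_range_one]
  show C (qBinom q 1 0) * Bpoly q 1 * qHermite q 0 + C (qBinom q 1 1) * Bpoly q 0 * qHermite q 1 = 0
  rw [qBinom_zero_right]
  show C 1 * (-X) * 1 + C (qBinom q 0 0 + q^1 * qBinom q 0 1) * 1 * X = 0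
  show C 1 * (-X) * 1 + C ((1:ℂ) + q^1 * 0) * 1 * X = 0
  simp

lemma Ssum_rec (q : ℂ) (m : ℕ) :
    Ssum q (m+2) = X * Ssum q (m+1) - C (qInt q (m+1)) * Ssum q m
      - C (q^(m+1)) * (X * Ssum q (m+1)) + C (q^m * qInt q (m+1)) * Ssum q m := by
  -- Split off the `k = 0` term and use the Pascal rule.
  have step1 : Ssum q (m+2)
      = (∑ k ∈ Finset.range (m+2), C (qBinom q (m+1) k) * Bpoly q (m+1-k) * qHermite q (k+1))
      + (∑ k ∈ Finset.range (m+2), C (q^k * qBinom q (m+1) k) * Bpoly q (m+2-k) * qHermite q k) := by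
    rw [Ssum, Finset.sum_range_succ']
    have hsplit : ∀ k ∈ Finset.range (m+2),
        C (qBinom q (m+2) (k+1)) * Bpoly q (m+2-(k+1)) * qHermite q (k+1)
        = C (qBinom q (m+1) k) * Bpoly q (m+1-k) * qHermite q (k+1)
          + C (q^(k+1) * qBinom q (m+1) (k+1)) * Bpoly q (m+2-(k+1)) * qHermite q (k+1) := by
      intro k _
      rw [Nat.succ_sub_succ, qBinom_succ_succ, C_add, C_mul]
      ring
    rw [Finset.sum_congr rfl hsplit, Finset.sum_add_distrib]
    have htail : (∑ k ∈ Finset.range (m+2),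
          C (q^(k+1) * qBinom q (m+1) (k+1)) * Bpoly q (m+2-(k+1)) * qHermite q (k+1))
        + C (q^0 * qBinom q (m+1) 0) * Bpoly q (m+2-0) * qHermite q 0
        = ∑ k ∈ Finset.range (m+2), C (q^k * qBinom q (m+1) k) * Bpoly q (m+2-k) * qHermite q k := by
      rw [← Finset.sum_range_succ' (fun k => C (q^k * qBinom q (m+1) k) * Bpoly q (m+2-k) * qHermite q k) (m+2),
        Finset.sum_range_succ]
      rw [qBinom_eq_zero q (m+1) (m+2) (Nat.lt_succ_self _)]
      simp
    rw [add_assoc, ← htail]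
    rw [qBinom_zero_right, qBinom_zero_right, pow_zero, one_mul]
  -- First sum: use the Hermite recurrence.
  have step2 : (∑ k ∈ Finset.range (m+2), C (qBinom q (m+1) k) * Bpoly q (m+1-k) * qHermite q (k+1))
      = X * Ssum q (m+1) - C (qInt q (m+1)) * Ssum q m := by
    have h : ∀ k ∈ Finset.range (m+2),
        C (qBinom q (m+1) k) * Bpoly q (m+1-k) * qHermite q (k+1)
        = X * (C (qBinom q (m+1) k) * Bpoly q (m+1-k) * qHermite q k)
          - C (qBinom q (m+1) k * qInt q k) * Bpoly q (m+1-k) * qHermite q (k-1) := by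
      intro k _
      rw [qHermite_succ, C_mul]
      ring
    rw [Finset.sum_congr rfl h, Finset.sum_sub_distrib, ← Finset.mul_sum, ← Ssum]
    congr 1
    -- the subtracted sum equals `C [m+1] * Ssum q m`
    rw [Finset.sum_range_succ' (fun k => C (qBinom q (m+1) k * qInt q k) * Bpoly q (m+1-k) * qHermite q (k-1)) (m+1)]
    have h0 : C (qBinom q (m+1) 0 * qInt q 0) * Bpoly q (m+1-0) * qHermite q (0-1) = 0 := by
      rw [qInt_zero, mul_zero, C_0, zero_mul, zero_mul]
    rw [h0, add_zero]
    have h1 : ∀ k ∈ Finset.range (m+1),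
        C (qBinom q (m+1) (k+1) * qInt q (k+1)) * Bpoly q (m+1-(k+1)) * qHermite q ((k+1)-1)
        = C (qInt q (m+1)) * (C (qBinom q m k) * Bpoly q (m-k) * qHermite q k) := by
      intro k _
      rw [lemA q m k, Nat.succ_sub_succ, Nat.succ_sub_one, C_mul]
      ring
    rw [Finset.sum_congr rfl h1, ← Finset.mul_sum, ← Ssum]
  -- Second sum: use the B recurrence.
  have step3 : (∑ k ∈ Finset.range (m+2), C (q^k * qBinom q (m+1) k) * Bpoly q (m+2-k) * qHermite q k)
      = -(C (q^(m+1)) * (X * Ssum q (m+1))) + C (q^m * qInt q (m+1)) * Ssum q m := by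
    have h : ∀ k ∈ Finset.range (m+2),
        C (q^k * qBinom q (m+1) k) * Bpoly q (m+2-k) * qHermite q k
        = -(C (q^(m+1)) * (X * (C (qBinom q (m+1) k) * Bpoly q (m+1-k) * qHermite q k)))
          + C (q^k * q^(m-k)) * C (qBinom q (m+1) k * qInt q (m+1-k)) * (Bpoly q (m-k) * qHermite q k) := by
      intro k hk
      have hk' : k ≤ m+1 := Nat.lt_succ_iff.mp (Finset.mem_range.mp hk)
      have e1 : m+2-k = (m+1-k)+1 := by omega
      have e2 : (m+1-k)-1 = m-k := by omega
      have e3 : C (q^(m+1)) = C (q^k) * C (q^(m+1-k)) := by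
        rw [← C_mul, ← pow_add]
        congr 2
        omega
      rw [e1, Bpoly_succ, e2]
      simp only [C_mul]
      rw [e3]
      ring
    rw [Finset.sum_congr rfl h, Finset.sum_add_distrib]
    congr 1
    · -- first part
      have : ∀ k ∈ Finset.range (m+2),
          -(C (q^(m+1)) * (X * (C (qBinom q (m+1) k) * Bpoly q (m+1-k) * qHermite q k)))
          = -(C (q^(m+1)) * X) * (C (qBinom q (m+1) k) * Bpoly q (m+1-k) * qHermite q k) := by
        intro k _; ring
      rw [Finset.sum_congr rfl this, ← Finset.mul_sum, ← Ssum]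
      ring
    · -- second part
      rw [Finset.sum_range_succ]
      have htop : C (q^(m+1) * q^(m-(m+1))) * C (qBinom q (m+1) (m+1) * qInt q (m+1-(m+1))) *
          (Bpoly q (m-(m+1)) * qHermite q (m+1)) = 0 := by
        rw [Nat.sub_self, qInt_zero, mul_zero, C_0]
        simp
      rw [htop, add_zero]
      have h2 : ∀ k ∈ Finset.range (m+1),
          C (q^k * q^(m-k)) * C (qBinom q (m+1) k * qInt q (m+1-k)) * (Bpoly q (m-k) * qHermite q k)
          = C (q^m * qInt q (m+1)) * (C (qBinom q m k) * Bpoly q (m-k) * qHermite q k) := by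
        intro k hk
        have hk' : k ≤ m := Nat.lt_succ_iff.mp (Finset.mem_range.mp hk)
        have e4 : q^k * q^(m-k) = q^m := by
          rw [← pow_add]
          congr 1
          omega
        rw [e4, lemB q m k]
        simp only [C_mul]
        ring
      rw [Finset.sum_congr rfl h2, ← Finset.mul_sum, ← Ssum]
  rw [step1, step2, step3]
  ring

lemma Ssum_eq_zero (q : ℂ) : ∀ n, Ssum q (n+1) = 0 ∧ Ssum q (n+2) = 0 := by
  intro n
  induction n with
  | zero =>
    refine ⟨Ssum_one q, ?_⟩
    rw [Ssum_rec q 0, Ssum_one q]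
    simp
  | succ n ih =>
    refine ⟨ih.2, ?_⟩
    rw [Ssum_rec q (n+1), ih.1, ih.2]
    simp

/-- Identity (10): for every `q ∈ ℂ` and every `n ≥ 1`,
`Σ_{k=0}^n [n choose k]_q B_{n-k}(x|q) H_k(x|q) = 0`, as an identity of polynomials in `x`. -/
theorem sum_qBinom_B_mul_qHermite_eq_zero (q : ℂ) (n : ℕ) (hn : 1 ≤ n) :
    ∑ k ∈ Finset.range (n + 1), C (qBinom q n k) * Bpoly q (n - k) * qHermite q k = 0 := by
  obtain ⟨m, rfl⟩ := Nat.exists_eq_add_of_le hn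
  have := (Ssum_eq_zero q m).1
  rw [Ssum] at this
  simpa [Nat.add_comm 1 m] using this
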